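/- If A ⊆ ℕ is a dynamical C*-set and n ∈ ℕ with n ≥ 1, then n⁻¹A = {m ∈ ℕ : nm ∈ A} is a dynamical C*-set. -/

import Mathlib

open MeasureTheory Filter

/-- Weak mixing for a measure-preserving system. -/
def WeakMixing {X : Type*} [MeasurableSpace X] (μ : Measure X) (T : X → X) : Prop :=
  ∀ A B : Set X, MeasurableSet A → MeasurableSet B →
    Tendsto (fun N : ℕ => (1 / N : ℝ) * ∑ n ∈ Finset.Icc 1 N,
      |(μ (A ∩ T^[n] ⁻¹' B)).toReal - (μ A).toReal * (μ B).toReal|)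
      atTop (nhds 0)

/-- `A ⊆ ℕ` is a dynamical C*-set: the positive return-time set of two sets of
positive measure in some weakly mixing probability system is contained in `A`. -/
def DynCStar (A : Set ℕ) : Prop :=
  ∃ (X : Type) (_ : MeasurableSpace X) (μ : Measure X) (T : X → X),
    IsProbabilityMeasure μ ∧ MeasurePreserving T μ μ ∧ WeakMixing μ T ∧
    ∃ A₀ A₁ : Set X, MeasurableSet A₀ ∧ MeasurableSet A₁ ∧ 0 < μ A₀ * μ A₁ ∧
      {n : ℕ | 0 < μ (A₀ ∩ T^[n] ⁻¹' A₁)} ⊆ A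

/-- Cesàro convergence of a nonnegative sequence passes to the subsequence of
multiples of `n`. -/
lemma cesaro_mul_subseq (a : ℕ → ℝ) (ha : ∀ k, 0 ≤ a k) (n : ℕ) (hn : 1 ≤ n)
    (h : Tendsto (fun N : ℕ => (1 / N : ℝ) * ∑ k ∈ Finset.Icc 1 N, a k) atTop (nhds 0)) :
    Tendsto (fun N : ℕ => (1 / N : ℝ) * ∑ k ∈ Finset.Icc 1 N, a (n * k)) atTop (nhds 0) := by
  have hmul : Tendsto (fun N : ℕ => n * N) atTop atTop :=
    tendsto_atTop_atTop.2 fun b => ⟨b, fun x hx => le_trans hx (Nat.le_mul_of_pos_left x hn)⟩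
  have h2 : Tendsto (fun N : ℕ =>
      (n : ℝ) * ((1 / (n * N : ℕ) : ℝ) * ∑ k ∈ Finset.Icc 1 (n * N), a k))
      atTop (nhds 0) := by
    have := (h.comp hmul).const_mul (n : ℝ)
    simpa using this
  refine squeeze_zero (fun N => ?_) (fun N => ?_) h2
  · exact mul_nonneg (by positivity) (Finset.sum_nonneg fun k _ => ha _)
  · rcases Nat.eq_zero_or_pos N with rfl | hN
    · simp
    have hsum : ∑ k ∈ Finset.Icc 1 N, a (n * k) ≤ ∑ k ∈ Finset.Icc 1 (n * N), a k := by
      have himg : ∑ k ∈ Finset.Icc 1 N, a (n * k)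
          = ∑ j ∈ (Finset.Icc 1 N).image (fun k => n * k), a j :=
        (Finset.sum_image (fun x _ y _ hxy => Nat.eq_of_mul_eq_mul_left hn hxy)).symm
      rw [himg]
      refine Finset.sum_le_sum_of_subset_of_nonneg ?_ fun k _ _ => ha k
      intro j hj
      simp only [Finset.mem_image, Finset.mem_Icc] at hj ⊢
      obtain ⟨k, ⟨hk1, hk2⟩, rfl⟩ := hj
      exact ⟨Nat.one_le_iff_ne_zero.2 (by positivity), Nat.mul_le_mul_left n hk2⟩
    have hco : (n : ℝ) * (1 / (n * N : ℕ) : ℝ) = 1 / N := by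
      have hn0 : (n : ℝ) ≠ 0 := by positivity
      have hN0 : (N : ℝ) ≠ 0 := Nat.cast_ne_zero.2 hN.ne'
      push_cast
      field_simp
    rw [← mul_assoc, hco]
    exact mul_le_mul_of_nonneg_left hsum (by positivity)

/-- If `A` is a dynamical C*-set and `n ≥ 1`, then `n⁻¹A = {m : n*m ∈ A}` is a
dynamical C*-set. -/
theorem dynCStar_div (A : Set ℕ) (hA : DynCStar A) (n : ℕ) (hn : 1 ≤ n) :
    DynCStar {m : ℕ | n * m ∈ A} := by
  obtain ⟨X, mX, μ, T, hμ, hT, hwm, A₀, A₁, h₀, h₁, hpos, hsub⟩ := hA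
  refine ⟨X, mX, μ, T^[n], hμ, hT.iterate n, ?_, A₀, A₁, h₀, h₁, hpos, ?_⟩
  · intro B C hB hC
    have key : ∀ k, (T^[n])^[k] = T^[n * k] := fun k => (Function.iterate_mul T n k).symm
    have main := cesaro_mul_subseq
      (fun k => |(μ (B ∩ T^[k] ⁻¹' C)).toReal - (μ B).toReal * (μ C).toReal|)
      (fun k => abs_nonneg _) n hn (hwm B C hB hC)
    refine main.congr fun N => ?_
    refine congrArg _ (Finset.sum_congr rfl fun k _ => ?_)
    rw [key k]
  · intro m hm
    have key : (T^[n])^[m] = T^[n * m] := (Function.iterate_mul T n m).symm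
    rw [Set.mem_setOf_eq, key] at hm
    exact hsub hm
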